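/- Adopt the visitation setup: (Ω, ℱ, P) a probability space with filtration (ℱ_t)_{t∈ℕ}, δ ∈ (0,1], for each t a random variable q_t that is ℱ_t-measurable with δ ≤ q_t ≤ 1 almost surely, and an indicator random variable I_t ∈ {0,1} that is ℱ_{t+1}-measurable with E[I_t | ℱ_t] = q_t almost surely; set n_t = ∑_{τ<t} I_τ. Let β : ℕ → [0, ∞) satisfy ∑_{t=0}^∞ β(t)² < ∞ and suppose there exists T ∈ ℕ such that β is nonincreasing on {t : t > T}. Then, almost surely, ∑_{t=0}^∞ β(n_t)² < ∞. -/

import Mathlib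

open MeasureTheory Filter Topology

/-- Visitation setup: with visit indicators `I t` whose conditional probabilities
`q t ∈ [δ, 1]`, visit counters `n_t = ∑_{τ<t} I_τ`, and an eventually nonincreasing
square-summable step-size schedule `β`, almost surely `∑_t β(n_t)² < ∞`. -/
theorem sq_summable_beta_comp_visits
    {Ω : Type*} {m : MeasurableSpace Ω} {P : Measure Ω} [IsProbabilityMeasure P]
    (ℱ : Filtration ℕ m) (δ : ℝ) (hδ : δ ∈ Set.Ioc (0 : ℝ) 1)
    (q : ℕ → Ω → ℝ)
    (hq_meas : ∀ t, StronglyMeasurable[ℱ t] (q t))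
    (hq_bdd : ∀ t, ∀ᵐ ω ∂P, δ ≤ q t ω ∧ q t ω ≤ 1)
    (I : ℕ → Ω → ℝ)
    (hI01 : ∀ t ω, I t ω = 0 ∨ I t ω = 1)
    (hI_meas : ∀ t, StronglyMeasurable[ℱ (t + 1)] (I t))
    (hIq : ∀ t, P[I t | ℱ t] =ᵐ[P] q t)
    (n : ℕ → Ω → ℕ)
    (hn : ∀ t ω, (n t ω : ℝ) = ∑ τ ∈ Finset.range t, I τ ω)
    (β : ℕ → ℝ) (hβ_nonneg : ∀ t, 0 ≤ β t)
    (hβ_sq : Summable (fun t => (β t) ^ 2))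
    (T : ℕ) (hβ_mono : ∀ s t : ℕ, T < s → s ≤ t → β t ≤ β s) :
    ∀ᵐ ω ∂P, Summable (fun t => (β (n t ω)) ^ 2) := by
  obtain ⟨hδ0, hδ1⟩ := hδ
  -- basic facts about I
  have hI_nonneg : ∀ t ω, 0 ≤ I t ω := fun t ω => by rcases hI01 t ω with h | h <;> simp [h]
  have hI_le_one : ∀ t ω, I t ω ≤ 1 := fun t ω => by rcases hI01 t ω with h | h <;> simp [h]
  have hI_sm : ∀ t, StronglyMeasurable (I t) := fun t => (hI_meas t).mono (ℱ.le _)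
  have hI_int : ∀ t, Integrable (I t) P := fun t =>
    (integrable_const (1:ℝ)).mono' (hI_sm t).aestronglyMeasurable
      (Filter.Eventually.of_forall fun ω => by
        rw [Real.norm_eq_abs, abs_le]
        exact ⟨by linarith [hI_nonneg t ω], hI_le_one t ω⟩)
  have hq_int : ∀ t, Integrable (q t) P := fun t =>
    (integrable_const (1:ℝ)).mono' ((hq_meas t).mono (ℱ.le t)).aestronglyMeasurable
      ((hq_bdd t).mono fun ω h => by
        rw [Real.norm_eq_abs, abs_le]
        exact ⟨by linarith [h.1], h.2⟩)
  -- n basics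
  have hn_mono : ∀ s t (ω : Ω), s ≤ t → n s ω ≤ n t ω := by
    intro s t ω hst
    have h : (n s ω : ℝ) ≤ (n t ω : ℝ) := by
      rw [hn, hn]
      exact Finset.sum_le_sum_of_subset_of_nonneg (Finset.range_subset_range.2 hst)
        (fun τ _ _ => hI_nonneg τ ω)
    exact_mod_cast h
  have hn_le : ∀ t ω, n t ω ≤ t := by
    intro t ω
    have h : (n t ω : ℝ) ≤ (t : ℝ) := by
      rw [hn]
      calc ∑ τ ∈ Finset.range t, I τ ω ≤ ∑ τ ∈ Finset.range t, 1 :=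
            Finset.sum_le_sum fun τ _ => hI_le_one τ ω
        _ = (t : ℝ) := by simp
    exact_mod_cast h
  have hn_succ : ∀ t ω, (n (t+1) ω : ℝ) = (n t ω : ℝ) + I t ω := by
    intro t ω; rw [hn, hn, Finset.sum_range_succ]
  -- the level sets
  set A : ℕ → ℕ → Set Ω := fun t k => {ω | n t ω = k} with hA_def
  have hA : ∀ t k, MeasurableSet[ℱ t] (A t k) := by
    intro t k
    have hf : StronglyMeasurable[ℱ t] (fun ω => (n t ω : ℝ)) := by
      have h : (fun ω => (n t ω : ℝ)) = fun ω => ∑ τ ∈ Finset.range t, I τ ω :=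
        funext fun ω => hn t ω
      rw [h]
      exact Finset.stronglyMeasurable_fun_sum _ fun τ hτ =>
        (hI_meas τ).mono (ℱ.mono (Nat.succ_le_of_lt (Finset.mem_range.1 hτ)))
    have h : A t k = (fun ω => (n t ω : ℝ)) ⁻¹' {(k : ℝ)} := by
      ext ω
      simp only [hA_def, Set.mem_setOf_eq, Set.mem_preimage, Set.mem_singleton_iff, Nat.cast_inj]
    rw [h]
    exact hf.measurable (measurableSet_singleton _)
  have hA_m : ∀ t k, MeasurableSet (A t k) := fun t k => ℱ.le t _ (hA t k)
  -- sets where the indicator is one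
  set O : ℕ → Set Ω := fun t => {ω | I t ω = 1} with hO_def
  have hO_m : ∀ t, MeasurableSet (O t) := fun t =>
    (hI_sm t).measurable (measurableSet_singleton (1:ℝ))
  have hI_ind : ∀ t, I t = (O t).indicator (fun _ => (1:ℝ)) := by
    intro t; funext ω
    rcases hI01 t ω with h | h
    · rw [h, Set.indicator_of_notMem]
      intro hmem
      have : I t ω = 1 := hmem
      rw [h] at this; norm_num at this
    · rw [h, Set.indicator_of_mem]
      exact h
  -- transfer of conditional expectation
  have hIq_set : ∀ t (s : Set Ω), MeasurableSet[ℱ t] s →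
      ∫ x in s, I t x ∂P = ∫ x in s, q t x ∂P := by
    intro t s hs
    rw [← setIntegral_condExp (ℱ.le t) (hI_int t) hs]
    exact setIntegral_congr_ae (ℱ.le t _ hs) ((hIq t).mono fun ω h _ => h)
  -- occupation-time bound: for each level k, ∑_{t<N} P(n_t = k) ≤ 2/δ
  have key : ∀ k N, ∑ t ∈ Finset.range N, (P (A t k)).toReal ≤ 2 / δ := by
    intro k N
    set a : ℕ → ℝ := fun t => (P (A t k)).toReal with ha_def
    set E : ℕ → Set Ω := fun t => A (t+1) k ∩ O t with hE_def
    have hE_m : ∀ t, MeasurableSet (E t) := fun t => (hA_m _ _).inter (hO_m t)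
    have ha_le1 : ∀ t, a t ≤ 1 := by
      intro t
      have h : (P (A t k)).toReal ≤ (1 : ENNReal).toReal :=
        ENNReal.toReal_mono ENNReal.one_ne_top prob_le_one
      simpa using h
    have ha_nonneg : ∀ t, 0 ≤ a t := fun t => ENNReal.toReal_nonneg
    -- one-step recursion
    have hrec : ∀ t, a (t+1) ≤ (1 - δ) * a t + (P (E t)).toReal := by
      intro t
      have hsplit : A (t+1) k ⊆ (A t k ∩ (O t)ᶜ) ∪ E t := by
        intro ω hω
        rcases hI01 t ω with h0 | h1
        · left
          have heq : (n (t+1) ω : ℝ) = (n t ω : ℝ) := by rw [hn_succ, h0, add_zero]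
          have heq' : n (t+1) ω = n t ω := Nat.cast_injective heq
          have hωA : n (t+1) ω = k := hω
          refine ⟨by simpa [hA_def, heq'] using hωA, ?_⟩
          intro hmem
          have : I t ω = 1 := hmem
          rw [h0] at this; norm_num at this
        · right
          exact ⟨hω, h1⟩
      have hA0 : (P (A t k ∩ (O t)ᶜ)).toReal ≤ (1 - δ) * a t := by
        have h1 : (P (A t k ∩ O t)).toReal = ∫ x in A t k, I t x ∂P := by
          rw [hI_ind t, setIntegral_indicator (hO_m t), setIntegral_const]
          simp [Measure.real]
        have h2 : δ * a t ≤ ∫ x in A t k, I t x ∂P := by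
          rw [hIq_set t _ (hA t k)]
          have h3 : ∫ x in A t k, δ ∂P ≤ ∫ x in A t k, q t x ∂P :=
            setIntegral_mono_ae (integrableOn_const)
              ((hq_int t).integrableOn) ((hq_bdd t).mono fun ω h => h.1)
          rw [setIntegral_const, smul_eq_mul, mul_comm] at h3
          exact h3
        have hsum : (P (A t k ∩ O t)).toReal + (P (A t k ∩ (O t)ᶜ)).toReal = a t := by
          rw [← ENNReal.toReal_add (measure_ne_top _ _) (measure_ne_top _ _), ha_def]
          congr 1
          rw [← Set.diff_eq, measure_inter_add_diff (A t k) (hO_m t)]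
        linarith
      have hle : a (t+1) ≤ (P (A t k ∩ (O t)ᶜ)).toReal + (P (E t)).toReal := by
        rw [← ENNReal.toReal_add (measure_ne_top _ _) (measure_ne_top _ _)]
        refine ENNReal.toReal_mono ?_ (le_trans (measure_mono hsplit) (measure_union_le _ _))
        exact ENNReal.add_ne_top.2 ⟨measure_ne_top _ _, measure_ne_top _ _⟩
      linarith
    -- entries into level k happen at most once
    have hE_mem : ∀ t ω, ω ∈ E t → n t ω + 1 = k ∧ n (t+1) ω = k := by
      intro t ω hω
      obtain ⟨h1, h2⟩ := hω
      have hωA : n (t+1) ω = k := h1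
      refine ⟨?_, hωA⟩
      have heq : ((n t ω + 1 : ℕ) : ℝ) = ((n (t+1) ω : ℕ) : ℝ) := by
        push_cast
        rw [hn_succ, h2]
      have heq' : n t ω + 1 = n (t+1) ω := Nat.cast_injective heq
      omega
    have hE_disj : ∀ ⦃t1 t2 : ℕ⦄, t1 < t2 → Disjoint (E t1) (E t2) := by
      intro t1 t2 hlt
      rw [Set.disjoint_left]
      intro ω h1 h2
      obtain ⟨ha1, hb1⟩ := hE_mem t1 ω h1
      obtain ⟨ha2, hb2⟩ := hE_mem t2 ω h2
      have hmono := hn_mono (t1+1) t2 ω hlt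
      omega
    have hE_sum : ∑ t ∈ Finset.range N, (P (E t)).toReal ≤ 1 := by
      have hdisj : (↑(Finset.range N) : Set ℕ).PairwiseDisjoint E := by
        intro t1 _ t2 _ hne
        rcases lt_or_gt_of_ne hne with h | h
        · exact hE_disj h
        · exact (hE_disj h).symm
      have hsum : ∑ t ∈ Finset.range N, P (E t) ≤ 1 := by
        rw [← measure_biUnion_finset hdisj (fun t _ => hE_m t)]
        exact prob_le_one
      calc ∑ t ∈ Finset.range N, (P (E t)).toReal
          = (∑ t ∈ Finset.range N, P (E t)).toReal :=
            (ENNReal.toReal_sum fun t _ => measure_ne_top _ _).symm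
        _ ≤ (1 : ENNReal).toReal := ENNReal.toReal_mono ENNReal.one_ne_top hsum
        _ = 1 := by simp
    -- telescoping
    have htel : δ * ∑ t ∈ Finset.range N, a t ≤ 2 := by
      have h1 : ∀ t, δ * a t ≤ (a t - a (t+1)) + (P (E t)).toReal := by
        intro t
        have := hrec t
        nlinarith [ha_nonneg t]
      calc δ * ∑ t ∈ Finset.range N, a t
          = ∑ t ∈ Finset.range N, δ * a t := Finset.mul_sum _ _ _
        _ ≤ ∑ t ∈ Finset.range N, ((a t - a (t+1)) + (P (E t)).toReal) :=
            Finset.sum_le_sum fun t _ => h1 t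
        _ = (a 0 - a N) + ∑ t ∈ Finset.range N, (P (E t)).toReal := by
            rw [Finset.sum_add_distrib, Finset.sum_range_sub' (fun t => a t) N]
        _ ≤ 1 + 1 := by
            have h0 := ha_le1 0
            have hN := ha_nonneg N
            linarith
        _ = 2 := by norm_num
    rw [le_div_iff₀ hδ0, mul_comm]
    exact htel
  -- representation of β(n_t)² as a finite sum of indicators
  have hg_repr : ∀ t, (fun ω => β (n t ω) ^ 2) =
      fun ω => ∑ k ∈ Finset.range (t+1), (A t k).indicator (fun _ => β k ^ 2) ω := by
    intro t; funext ω
    symm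
    rw [Finset.sum_eq_single (n t ω)]
    · exact Set.indicator_of_mem rfl (fun _ => β (n t ω) ^ 2)
    · intro k _ hk
      refine Set.indicator_of_notMem ?_ _
      intro h
      exact hk (Eq.symm h)
    · intro h
      exact absurd (Finset.mem_range.2 (Nat.lt_succ_of_le (hn_le t ω))) h
  have hg_int : ∀ t, Integrable (fun ω => β (n t ω) ^ 2) P := by
    intro t
    rw [hg_repr t]
    exact integrable_finset_sum _ fun k _ => (integrable_const _).indicator (hA_m t k)
  have hg_integral : ∀ t, ∫ ω, β (n t ω) ^ 2 ∂P =
      ∑ k ∈ Finset.range (t+1), β k ^ 2 * (P (A t k)).toReal := by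
    intro t
    rw [hg_repr t, integral_finset_sum _ (fun k _ => (integrable_const _).indicator (hA_m t k))]
    refine Finset.sum_congr rfl fun k _ => ?_
    rw [integral_indicator_const _ (hA_m t k), smul_eq_mul, mul_comm]; rfl
  -- uniform bound on expected partial sums
  set C := ∑' k, β k ^ 2 with hC
  have hmain : ∀ N, ∑ t ∈ Finset.range N, ∫ ω, β (n t ω) ^ 2 ∂P ≤ 2 / δ * C := by
    intro N
    calc ∑ t ∈ Finset.range N, ∫ ω, β (n t ω) ^ 2 ∂P
        = ∑ t ∈ Finset.range N, ∑ k ∈ Finset.range (t+1), β k ^ 2 * (P (A t k)).toReal :=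
          Finset.sum_congr rfl fun t _ => hg_integral t
      _ ≤ ∑ t ∈ Finset.range N, ∑ k ∈ Finset.range N, β k ^ 2 * (P (A t k)).toReal := by
          refine Finset.sum_le_sum fun t ht => ?_
          refine Finset.sum_le_sum_of_subset_of_nonneg
            (Finset.range_subset_range.2 (Finset.mem_range.1 ht)) fun k _ _ =>
            mul_nonneg (sq_nonneg _) ENNReal.toReal_nonneg
      _ = ∑ k ∈ Finset.range N, β k ^ 2 * ∑ t ∈ Finset.range N, (P (A t k)).toReal := by
          rw [Finset.sum_comm]
          exact Finset.sum_congr rfl fun k _ => (Finset.mul_sum _ _ _).symm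
      _ ≤ ∑ k ∈ Finset.range N, β k ^ 2 * (2 / δ) :=
          Finset.sum_le_sum fun k _ => mul_le_mul_of_nonneg_left (key k N) (sq_nonneg _)
      _ = (∑ k ∈ Finset.range N, β k ^ 2) * (2 / δ) := by rw [← Finset.sum_mul]
      _ ≤ C * (2 / δ) := by
          refine mul_le_mul_of_nonneg_right
            (Summable.sum_le_tsum _ (fun k _ => sq_nonneg _) hβ_sq) ?_
          positivity
      _ = 2 / δ * C := mul_comm _ _
  -- measurability of n t
  have hn_meas : ∀ t, Measurable (n t) := by
    intro t
    refine measurable_to_countable' fun k => ?_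
    have h : n t ⁻¹' {k} = A t k := rfl
    rw [h]; exact hA_m t k
  have hgm : ∀ t, Measurable fun ω => ENNReal.ofReal (β (n t ω) ^ 2) := fun t =>
    (measurable_from_nat (f := fun k => ENNReal.ofReal (β k ^ 2))).comp (hn_meas t)
  -- lintegral of the total sum is finite
  have hlint : ∫⁻ ω, ∑' t, ENNReal.ofReal (β (n t ω) ^ 2) ∂P ≠ ⊤ := by
    rw [lintegral_tsum fun t => (hgm t).aemeasurable]
    have hb : ∑' t, ∫⁻ ω, ENNReal.ofReal (β (n t ω) ^ 2) ∂P ≤ ENNReal.ofReal (2 / δ * C) := by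
      rw [ENNReal.tsum_eq_iSup_sum]
      refine iSup_le fun s => ?_
      obtain ⟨N, hN⟩ := s.exists_nat_subset_range
      calc ∑ t ∈ s, ∫⁻ ω, ENNReal.ofReal (β (n t ω) ^ 2) ∂P
          ≤ ∑ t ∈ Finset.range N, ∫⁻ ω, ENNReal.ofReal (β (n t ω) ^ 2) ∂P :=
            Finset.sum_le_sum_of_subset hN
        _ = ∑ t ∈ Finset.range N, ENNReal.ofReal (∫ ω, β (n t ω) ^ 2 ∂P) := by
            refine Finset.sum_congr rfl fun t _ => ?_
            rw [ofReal_integral_eq_lintegral_ofReal (hg_int t)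
              (Filter.Eventually.of_forall fun ω => sq_nonneg _)]
        _ = ENNReal.ofReal (∑ t ∈ Finset.range N, ∫ ω, β (n t ω) ^ 2 ∂P) :=
            (ENNReal.ofReal_sum_of_nonneg fun t _ =>
              integral_nonneg fun ω => sq_nonneg _).symm
        _ ≤ ENNReal.ofReal (2 / δ * C) := ENNReal.ofReal_le_ofReal (hmain N)
    exact ne_top_of_le_ne_top ENNReal.ofReal_ne_top hb
  have hae := ae_lt_top (Measurable.ennreal_tsum hgm) hlint
  filter_upwards [hae] with ω hω
  have hsum : Summable fun t => (ENNReal.ofReal (β (n t ω) ^ 2)).toReal :=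
    ENNReal.summable_toReal hω.ne
  have heq : (fun t => (ENNReal.ofReal (β (n t ω) ^ 2)).toReal) =
      fun t => β (n t ω) ^ 2 :=
    funext fun t => ENNReal.toReal_ofReal (sq_nonneg _)
  rwa [heq] at hsum
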